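/- Let C = C_1 ⋯ C_n be a descending product of core transformations (as (n+1)×(n+1) unitary matrices) such that C z = α e_1, where z = -(v_2, v_3, ..., v_n, v_1, 1)^T and |α| = ‖z‖₂. Let Y be the (n+1)×(n+1) permutation matrix that is the identity in the first n-1 rows/columns and has the 2×2 block [0, 1; 1, 0] in rows/columns n, n+1. Set B = C Y and y = e_n ∈ ℂ^{n+1}. Then C*(B + α e_1 y^T) equals the (n+1)×(n+1) matrix R̲ that is the identity in its first n-1 diagonal entries, with column n equal to (-v_2, ..., -v_n, -v_1, 0)^T and entry (n, n+1) equal to 1, all other entries zero. In particular R̲ is upper triangular with zero last row. -/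

import Mathlib

open Matrix Finset

lemma mul_vecMulVec' {m : Type*} [Fintype m] [DecidableEq m]
    (A : Matrix m m ℂ) (u v : m → ℂ) :
    A * Matrix.vecMulVec u v = Matrix.vecMulVec (A *ᵥ u) v := by
  ext i j
  simp only [Matrix.mul_apply, Matrix.vecMulVec_apply, Matrix.mulVec, dotProduct]
  rw [Finset.sum_mul]
  congr 1
  ext k
  ring

/-- Factorization of the augmented upper triangular unitary-plus-rank-one
matrix: with `C z = α e₁`, `|α| = ‖z‖₂`, `Y` the permutation swapping the last
two rows/columns, `B = C Y` and `y = eₙ`, one has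
`C*(B + α e₁ yᵀ) = R̲`, where `R̲` is identity in its first `n-1` diagonal
entries, has column `n` equal to `(-v₂, …, -vₙ, -v₁, 0)ᵀ`, entry `(n, n+1)`
equal to `1`, and zeros elsewhere; in particular `R̲` is upper triangular with
zero last row. (`v` is 1-based.) -/
theorem augmented_triangular_factorization (n : ℕ) (hn : 0 < n) (v : ℕ → ℂ)
    (C Y R : Matrix (Fin (n + 1)) (Fin (n + 1)) ℂ)
    (z : Fin (n + 1) → ℂ) (α : ℂ)
    (hz : ∀ i : Fin (n + 1), z i =
      if (i : ℕ) < n - 1 then -v ((i : ℕ) + 2)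
      else if (i : ℕ) = n - 1 then -v 1
      else -1)
    (hCu : C ∈ Matrix.unitaryGroup (Fin (n + 1)) ℂ)
    (hCz : C *ᵥ z = α • (Pi.single (0 : Fin (n + 1)) (1 : ℂ) : Fin (n + 1) → ℂ))
    (hα : ‖α‖ = Real.sqrt (∑ i, ‖z i‖ ^ 2))
    (hY : ∀ i j : Fin (n + 1), Y i j =
      if ((i : ℕ) < n - 1 ∧ i = j) ∨ ((i : ℕ) = n - 1 ∧ (j : ℕ) = n) ∨
          ((i : ℕ) = n ∧ (j : ℕ) = n - 1) then 1 else 0)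
    (hR : ∀ i j : Fin (n + 1), R i j =
      if (j : ℕ) = n - 1 then
        (if (i : ℕ) < n - 1 then -v ((i : ℕ) + 2)
         else if (i : ℕ) = n - 1 then -v 1
         else 0)
      else if (i : ℕ) = (j : ℕ) ∧ (i : ℕ) < n - 1 then 1
      else if (i : ℕ) = n - 1 ∧ (j : ℕ) = n then 1
      else 0) :
    Cᴴ * (C * Y + α • Matrix.vecMulVec ((Pi.single (0 : Fin (n + 1)) (1 : ℂ) : Fin (n + 1) → ℂ))
        ((Pi.single (⟨n - 1, by omega⟩ : Fin (n + 1)) (1 : ℂ) : Fin (n + 1) → ℂ))) = R ∧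
      (∀ i j : Fin (n + 1), (j : ℕ) < (i : ℕ) → R i j = 0) ∧
      (∀ j : Fin (n + 1), R (Fin.last n) j = 0) := by
  have hCC : Cᴴ * C = 1 := by
    have := Matrix.mem_unitaryGroup_iff'.mp hCu
    simpa [Matrix.star_eq_conjTranspose] using this
  have hkey : Cᴴ *ᵥ (α • (Pi.single (0 : Fin (n + 1)) (1 : ℂ) : Fin (n + 1) → ℂ)) = z := by
    rw [← hCz, Matrix.mulVec_mulVec, hCC, Matrix.one_mulVec]
  have hfac : Cᴴ * (C * Y + α • Matrix.vecMulVec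
      ((Pi.single (0 : Fin (n + 1)) (1 : ℂ) : Fin (n + 1) → ℂ))
      ((Pi.single (⟨n - 1, by omega⟩ : Fin (n + 1)) (1 : ℂ) : Fin (n + 1) → ℂ))) =
      Y + Matrix.vecMulVec z
        ((Pi.single (⟨n - 1, by omega⟩ : Fin (n + 1)) (1 : ℂ) : Fin (n + 1) → ℂ)) := by
    rw [Matrix.mul_add, ← Matrix.mul_assoc, hCC, Matrix.one_mul, Matrix.mul_smul,
      mul_vecMulVec']
    congr 1
    rw [← hkey, Matrix.mulVec_smul]
    ext i j
    simp [Matrix.vecMulVec_apply, mul_assoc]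
  refine ⟨?_, ?_, ?_⟩
  · rw [hfac]
    ext i j
    have hi := i.isLt
    have hj := j.isLt
    simp only [Matrix.add_apply, Matrix.vecMulVec_apply, hY, hR, hz, Pi.single_apply,
      Fin.ext_iff, Fin.val_mk]
    split_ifs <;> first | ring1 | (exfalso; omega)
  · intro i j hji
    rw [hR]
    split_ifs <;> first | rfl | (exfalso; omega)
  · intro j
    rw [hR]
    have hj := j.isLt
    simp only [Fin.val_last]
    split_ifs <;> first | rfl | (exfalso; omega)
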